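/- arXiv:2602.22704 — 3 statements merged into one kernel-verified Lean document; each statement's English description precedes it below -/
import Mathlib

section
/- Let L be a finite-dimensional Lie algebra over a field F and let z ∈ L. Then sol_L(z) is the union of all maximal solvable Lie subalgebras of L that contain z; that is, x ∈ sol_L(z) if and only if there exists a Lie subalgebra M of L that is solvable, contains z and x, and is maximal among solvable Lie subalgebras of L. -/
/-- The solvabilizer of `z` in `L`. -/
def solvabilizerElt (F : Type*) {L : Type*} [Field F] [LieRing L] [LieAlgebra F L]
    (z : L) : Set L :=
  {x : L | LieAlgebra.IsSolvable (LieSubalgebra.lieSpan F L {x, z})}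

lemma isSolvable_of_le {F L : Type*} [Field F] [LieRing L] [LieAlgebra F L]
    {K M : LieSubalgebra F L} (hM : LieAlgebra.IsSolvable M) (h : K ≤ M) :
    LieAlgebra.IsSolvable K :=
  haveI := hM; (LieSubalgebra.inclusion_injective h).lieAlgebra_isSolvable

/-- `sol_L(z)` is the union of all maximal solvable subalgebras of `L` containing `z`. -/
theorem solvabilizerElt_eq_union_maximal_solvable (F L : Type*) [Field F] [LieRing L]
    [LieAlgebra F L] [Module.Finite F L] (z x : L) :
    x ∈ solvabilizerElt F z ↔
      ∃ M : LieSubalgebra F L, LieAlgebra.IsSolvable M ∧ z ∈ M ∧ x ∈ M ∧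
        ∀ N : LieSubalgebra F L, LieAlgebra.IsSolvable N → M ≤ N → M = N := by
  constructor
  · intro hx
    set K := LieSubalgebra.lieSpan F L {x, z} with hK
    have hwf : WellFounded (fun a b : LieSubalgebra F L =>
        (a : Submodule F L) > (b : Submodule F L)) :=
      InvImage.wf _ (wellFounded_gt (α := Submodule F L))
    obtain ⟨M, ⟨hMsolv, hKM⟩, hmax⟩ :=
      hwf.has_min {N : LieSubalgebra F L | LieAlgebra.IsSolvable N ∧ K ≤ N} ⟨K, hx, le_rfl⟩
    refine ⟨M, hMsolv, ?_, ?_, ?_⟩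
    · exact hKM (LieSubalgebra.subset_lieSpan (by simp))
    · exact hKM (LieSubalgebra.subset_lieSpan (by simp))
    · intro N hNsolv hMN
      have hN : N ∈ {N : LieSubalgebra F L | LieAlgebra.IsSolvable N ∧ K ≤ N} := ⟨hNsolv, hKM.trans hMN⟩
      have := hmax N hN
      have hle : (M : Submodule F L) ≤ (N : Submodule F L) :=
        (LieSubalgebra.toSubmodule_le_toSubmodule (K := M) (K' := N)).mpr hMN
      have heq : (M : Submodule F L) = (N : Submodule F L) :=
        le_antisymm hle (by by_contra h; exact this (lt_of_le_of_ne hle (fun e => h (e ▸ le_rfl))))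
      exact LieSubalgebra.toSubmodule_injective heq
  · rintro ⟨M, hMsolv, hzM, hxM, -⟩
    have h : LieSubalgebra.lieSpan F L {x, z} ≤ M :=
      (LieSubalgebra.lieSpan_le).mpr (by
        rintro y (rfl | rfl) <;> simpa)
    exact isSolvable_of_le hMsolv h
end

section
/- Let L₁ and L₂ be finite-dimensional Lie algebras over a field F and let L = L₁ × L₂ be their direct sum. Then sol(L) = sol(L₁) × sol(L₂); that is, (x₁, x₂) ∈ sol(L₁ × L₂) if and only if x₁ ∈ sol(L₁) and x₂ ∈ sol(L₂). -/
section ProdLie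

variable (F : Type*) (L₁ L₂ : Type*) [Field F] [LieRing L₁] [LieAlgebra F L₁]
  [LieRing L₂] [LieAlgebra F L₂]

/-- The componentwise bracket on the product. -/
instance Prod.instBracketProd : Bracket (L₁ × L₂) (L₁ × L₂) :=
  ⟨fun x y => (⁅x.1, y.1⁆, ⁅x.2, y.2⁆)⟩

@[simp] theorem Prod.bracket_def (x y : L₁ × L₂) :
    ⁅x, y⁆ = (⁅x.1, y.1⁆, ⁅x.2, y.2⁆) := rfl

/-- The direct sum (product) of two Lie rings, with componentwise bracket. -/
instance Prod.instLieRingProd : LieRing (L₁ × L₂) where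
  add_lie x y z := by ext <;> simp [add_lie]
  lie_add x y z := by ext <;> simp [lie_add]
  lie_self x := by ext <;> simp
  leibniz_lie x y z := by
    ext <;> simp only [Prod.bracket_def, Prod.fst_add, Prod.snd_add] <;>
      exact leibniz_lie _ _ _

/-- The direct sum (product) of two Lie algebras. -/
instance Prod.instLieAlgebraProd : LieAlgebra F (L₁ × L₂) where
  lie_smul t x y := by ext <;> simp [lie_smul]

end ProdLie

/-- The solvabilizer of the Lie algebra `L`. -/
def solvabilizerAlg (F L : Type*) [Field F] [LieRing L] [LieAlgebra F L] : Set L :=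
  {x : L | ∀ z : L, LieAlgebra.IsSolvable (LieSubalgebra.lieSpan F L {x, z})}

section Aux

variable (F : Type*) (L₁ L₂ : Type*) [Field F] [LieRing L₁] [LieAlgebra F L₁]
  [LieRing L₂] [LieAlgebra F L₂]

/-- The first projection as a Lie algebra hom. -/
def lieFst : (L₁ × L₂) →ₗ⁅F⁆ L₁ :=
  { LinearMap.fst F L₁ L₂ with map_lie' := rfl }

/-- The second projection as a Lie algebra hom. -/
def lieSnd : (L₁ × L₂) →ₗ⁅F⁆ L₂ :=
  { LinearMap.snd F L₁ L₂ with map_lie' := rfl }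

@[simp] lemma lieFst_apply (x : L₁ × L₂) : lieFst F L₁ L₂ x = x.1 := rfl
@[simp] lemma lieSnd_apply (x : L₁ × L₂) : lieSnd F L₁ L₂ x = x.2 := rfl

lemma prod_isSolvable (F : Type*) [Field F] [LieAlgebra F L₁] [LieAlgebra F L₂] [LieAlgebra.IsSolvable L₁] [LieAlgebra.IsSolvable L₂] :
    LieAlgebra.IsSolvable (L₁ × L₂) := by
  obtain ⟨k, hk⟩ := LieAlgebra.IsSolvable.solvable F L₁
  obtain ⟨l, hl⟩ := LieAlgebra.IsSolvable.solvable F L₂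
  refine LieAlgebra.IsSolvable.mk (R := F) (k := max k l) ?_
  have h1 : (LieAlgebra.derivedSeries F (L₁ × L₂) (max k l)).map (lieFst F L₁ L₂) = ⊥ := by
    rw [LieIdeal.derivedSeries_map_eq _ (fun y => ⟨(y, 0), rfl⟩)]
    rw [LieAlgebra.derivedSeries_def] at hk ⊢
    exact le_bot_iff.mp (hk ▸ LieAlgebra.derivedSeriesOfIdeal_antitone ⊤ (le_max_left k l))
  have h2 : (LieAlgebra.derivedSeries F (L₁ × L₂) (max k l)).map (lieSnd F L₁ L₂) = ⊥ := by
    rw [LieIdeal.derivedSeries_map_eq _ (fun y => ⟨(0, y), rfl⟩)]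
    rw [LieAlgebra.derivedSeries_def] at hl ⊢
    exact le_bot_iff.mp (hl ▸ LieAlgebra.derivedSeriesOfIdeal_antitone ⊤ (le_max_right k l))
  rw [LieIdeal.map_eq_bot_iff] at h1 h2
  rw [eq_bot_iff]
  intro x hx
  have e1 : x.1 = 0 := h1 hx
  have e2 : x.2 = 0 := h2 hx
  simp only [LieSubmodule.mem_bot]
  exact Prod.ext e1 e2

end Aux

/-- The solvabilizer of a direct sum is the product of the solvabilizers. -/
theorem solvabilizerAlg_prod (F L₁ L₂ : Type*) [Field F]
    [LieRing L₁] [LieAlgebra F L₁] [LieRing L₂] [LieAlgebra F L₂]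
    [Module.Finite F L₁] [Module.Finite F L₂] :
    solvabilizerAlg F (L₁ × L₂) = solvabilizerAlg F L₁ ×ˢ solvabilizerAlg F L₂ := by
  ext x
  simp only [solvabilizerAlg, Set.mem_setOf_eq, Set.mem_prod]
  constructor
  · intro hx
    constructor
    · intro z₁
      haveI := hx (z₁, 0)
      set S := LieSubalgebra.lieSpan F (L₁ × L₂) {x, (z₁, 0)} with hS
      let f : S →ₗ⁅F⁆ L₁ := (lieFst F L₁ L₂).comp S.incl
      haveI : LieAlgebra.IsSolvable f.range := f.isSolvable_range
      have hle : LieSubalgebra.lieSpan F L₁ {x.1, z₁} ≤ f.range := by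
        rw [LieSubalgebra.lieSpan_le]
        intro a ha
        simp only [Set.mem_insert_iff, Set.mem_singleton_iff] at ha
        rcases ha with rfl | rfl
        · exact ⟨⟨x, LieSubalgebra.subset_lieSpan (Set.mem_insert _ _)⟩, rfl⟩
        · exact ⟨⟨(a, 0), LieSubalgebra.subset_lieSpan (Set.mem_insert_of_mem _ rfl)⟩, rfl⟩
      exact (LieSubalgebra.inclusion_injective hle).lieAlgebra_isSolvable
    · intro z₂
      haveI := hx (0, z₂)
      set S := LieSubalgebra.lieSpan F (L₁ × L₂) {x, (0, z₂)} with hS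
      let f : S →ₗ⁅F⁆ L₂ := (lieSnd F L₁ L₂).comp S.incl
      haveI : LieAlgebra.IsSolvable f.range := f.isSolvable_range
      have hle : LieSubalgebra.lieSpan F L₂ {x.2, z₂} ≤ f.range := by
        rw [LieSubalgebra.lieSpan_le]
        intro a ha
        simp only [Set.mem_insert_iff, Set.mem_singleton_iff] at ha
        rcases ha with rfl | rfl
        · exact ⟨⟨x, LieSubalgebra.subset_lieSpan (Set.mem_insert _ _)⟩, rfl⟩
        · exact ⟨⟨(0, a), LieSubalgebra.subset_lieSpan (Set.mem_insert_of_mem _ rfl)⟩, rfl⟩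
      exact (LieSubalgebra.inclusion_injective hle).lieAlgebra_isSolvable
  · rintro ⟨h1, h2⟩ z
    haveI := h1 z.1
    haveI := h2 z.2
    set T₁ := LieSubalgebra.lieSpan F L₁ {x.1, z.1} with hT₁
    set T₂ := LieSubalgebra.lieSpan F L₂ {x.2, z.2} with hT₂
    haveI : LieAlgebra.IsSolvable (T₁ × T₂) := prod_isSolvable T₁ T₂ F
    have hmem : ∀ w : L₁ × L₂, w ∈ LieSubalgebra.lieSpan F (L₁ × L₂) {x, z} →
        w.1 ∈ T₁ ∧ w.2 ∈ T₂ := by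
      have hle : LieSubalgebra.lieSpan F (L₁ × L₂) {x, z} ≤
          (T₁.comap (lieFst F L₁ L₂)) ⊓ (T₂.comap (lieSnd F L₁ L₂)) := by
        rw [LieSubalgebra.lieSpan_le]
        intro a ha
        simp only [Set.mem_insert_iff, Set.mem_singleton_iff] at ha
        rcases ha with rfl | rfl
        · exact ⟨LieSubalgebra.subset_lieSpan (Set.mem_insert _ _),
            LieSubalgebra.subset_lieSpan (Set.mem_insert _ _)⟩
        · exact ⟨LieSubalgebra.subset_lieSpan (Set.mem_insert_of_mem _ rfl),
            LieSubalgebra.subset_lieSpan (Set.mem_insert_of_mem _ rfl)⟩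
      intro w hw
      exact hle hw
    let g : LieSubalgebra.lieSpan F (L₁ × L₂) {x, z} →ₗ⁅F⁆ T₁ × T₂ :=
      { toFun := fun w => (⟨(w : L₁ × L₂).1, (hmem w w.2).1⟩, ⟨(w : L₁ × L₂).2, (hmem w w.2).2⟩)
        map_add' := fun a b => rfl
        map_smul' := fun t a => rfl
        map_lie' := fun {a b} => rfl }
    have hg : Function.Injective g := by
      intro a b hab
      apply Subtype.ext
      have e1 := congrArg (fun p : T₁ × T₂ => (p.1 : L₁)) hab
      have e2 := congrArg (fun p : T₁ × T₂ => (p.2 : L₂)) hab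
      exact Prod.ext e1 e2
    exact hg.lieAlgebra_isSolvable
end

section
/- Let 0 → A →^α B →^β C → 0 be a short exact sequence of Lie algebras over a field F (α an injective Lie algebra homomorphism, β a surjective Lie algebra homomorphism, and the range of α equals the kernel of β). Then β(sol(B)) ⊆ sol(C), and every x ∈ sol(B) with β(x) = 0 lies in α(sol(A)); that is, ker(β|_{sol(B)}) ⊆ α(sol(A)). -/
lemma isSolvable_of_le_aux {F L : Type*} [Field F] [LieRing L] [LieAlgebra F L]
    {K K' : LieSubalgebra F L} (h : K ≤ K') (h' : LieAlgebra.IsSolvable K') :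
    LieAlgebra.IsSolvable K :=
  (LieSubalgebra.inclusion_injective h).lieAlgebra_isSolvable (hL := h')

/-- For a short exact sequence `0 → A → B → C → 0` of Lie algebras, `β(sol(B)) ⊆ sol(C)`
and the kernel of `β` restricted to `sol(B)` is contained in `α(sol(A))`. -/
theorem solvabilizer_short_exact (F A B C : Type*) [Field F]
    [LieRing A] [LieAlgebra F A] [LieRing B] [LieAlgebra F B] [LieRing C] [LieAlgebra F C]
    (α : A →ₗ⁅F⁆ B) (β : B →ₗ⁅F⁆ C)
    (hinj : Function.Injective α) (hsurj : Function.Surjective β)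
    (hexact : Set.range α = {x : B | β x = 0}) :
    β '' solvabilizerAlg F B ⊆ solvabilizerAlg F C ∧
      ∀ x ∈ solvabilizerAlg F B, β x = 0 → x ∈ α '' solvabilizerAlg F A := by
  constructor
  · rintro _ ⟨x, hx, rfl⟩ z
    obtain ⟨w, rfl⟩ := hsurj z
    set S := LieSubalgebra.lieSpan F B {x, w}
    have hS : LieAlgebra.IsSolvable S := hx w
    let g : S →ₗ⁅F⁆ C := β.comp S.incl
    have hrange : LieAlgebra.IsSolvable g.range := g.isSolvable_range
    refine isSolvable_of_le_aux ?_ hrange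
    rw [LieSubalgebra.lieSpan_le]
    rintro y (rfl | rfl)
    · exact ⟨⟨x, LieSubalgebra.subset_lieSpan (by simp)⟩, rfl⟩
    · exact ⟨⟨w, LieSubalgebra.subset_lieSpan (by simp)⟩, rfl⟩
  · rintro x hx hβx
    have : x ∈ Set.range α := by rw [hexact]; exact hβx
    obtain ⟨a, rfl⟩ := this
    refine ⟨a, fun z => ?_, rfl⟩
    set S := LieSubalgebra.lieSpan F B {α a, α z}
    have hS : LieAlgebra.IsSolvable S := hx (α z)
    let g : (LieSubalgebra.lieSpan F A {a, z}) →ₗ⁅F⁆ B :=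
      α.comp (LieSubalgebra.lieSpan F A {a, z}).incl
    have hginj : Function.Injective g := by
      intro u v huv
      exact Subtype.ext (hinj huv)
    have hsub : LieSubalgebra.lieSpan F A {a, z} ≤ S.comap α := by
      rw [LieSubalgebra.lieSpan_le]
      rintro y (rfl | rfl) <;> exact LieSubalgebra.subset_lieSpan (by simp)
    have hrange : g.range ≤ S := by
      rintro _ ⟨⟨y, hy⟩, rfl⟩
      exact hsub hy
    have hrs : LieAlgebra.IsSolvable g.range := isSolvable_of_le_aux hrange hS
    have := (g.equivRangeOfInjective hginj)
    exact (LieAlgebra.solvable_iff_equiv_solvable this).mpr hrs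
end
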